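/- Example 1 (σ = 1, non-existence): For every d > 0 there is no function φ : [0,d] → ℝ with φ(0) = 0 such that for every x ∈ [0,d] one has |φ(x)| ≤ 2x² and φ has derivative 4·√(2x² − |φ(x)|) + 6x at x within [0,d] (one-sided at the endpoints). -/

import Mathlib

open Set

/-- Example 1 (σ = 1): non-existence of a solution of
`y' = 4√(2x² − |y|) + 6x` through the origin in the right half-plane. -/
theorem example1_sigma_pos_nonexistence :
    ∀ d : ℝ, 0 < d →
      ¬ ∃ φ : ℝ → ℝ, φ 0 = 0 ∧
        ∀ x ∈ Icc (0 : ℝ) d, |φ x| ≤ 2 * x ^ 2 ∧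
          HasDerivWithinAt φ (4 * Real.sqrt (2 * x ^ 2 - |φ x|) + 6 * x)
            (Icc (0 : ℝ) d) x := by
  intro d hd
  rintro ⟨φ, hφ0, h⟩
  set ψ : ℝ → ℝ := fun x => φ x - 3 * x ^ 2 with hψ
  have hmono : MonotoneOn ψ (Icc (0 : ℝ) d) := by
    apply monotoneOn_of_hasDerivWithinAt_nonneg (f' := fun x =>
      4 * Real.sqrt (2 * x ^ 2 - |φ x|)) (convex_Icc 0 d)
    · intro x hx
      exact ((h x hx).2.continuousWithinAt).sub (Continuous.continuousWithinAt (by continuity))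
    · intro x hx
      have hx' : x ∈ Icc (0 : ℝ) d := interior_subset hx
      have h1 : HasDerivWithinAt (fun y => φ y - 3 * y ^ 2) (4 * Real.sqrt (2 * x ^ 2 - |φ x|) + 6 * x - 3 * ((2:ℕ) * x ^ (2 - 1))) (Icc (0:ℝ) d) x := ((h x hx').2).sub ((hasDerivAt_pow 2 x).const_mul 3).hasDerivWithinAt
      have : HasDerivWithinAt ψ (4 * Real.sqrt (2 * x ^ 2 - |φ x|)) (Icc (0:ℝ) d) x := by
        convert h1 using 1; push_cast; ring
      exact this.mono interior_subset
    · intro x hx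
      positivity
  have h0d : (0:ℝ) ∈ Icc (0:ℝ) d := ⟨le_refl 0, hd.le⟩
  have hdd : d ∈ Icc (0:ℝ) d := ⟨hd.le, le_refl d⟩
  have := hmono h0d hdd hd.le
  have hψ0 : ψ 0 = 0 := by simp [hψ, hφ0]
  have hle : 3 * d ^ 2 ≤ φ d := by
    have : (0:ℝ) ≤ φ d - 3 * d ^ 2 := by rw [← hψ0]; exact this
    linarith
  have habs := (h d hdd).1
  have : φ d ≤ |φ d| := le_abs_self _
  nlinarith
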